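/- Let L be a Moufang loop of class at most 2 (every commutator and associator of L lies in the center Z(L)). Then for all c, d, e, f ∈ L and all integers n: [c,d] = [d,c]⁻¹; [cⁿ,d] = [c,d]ⁿ; [cd,e] = [c,e][d,e][c,d,e]³; [c,d,d] = [d,c,d] = [d,d,c] = 1; [c,d,e] = [d,c,e]⁻¹ = [d,e,c]; [cⁿ,d,e] = [c,d,e]ⁿ; and [cd,e,f] = [c,e,f][d,e,f]. -/
import Mathlib


/-- An inverse property loop: a set with multiplication, identity, and two-sided
inverses satisfying `a⁻¹(ax) = x = (xa)a⁻¹`. -/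
class IPLoop (L : Type*) extends Mul L, One L, Inv L where
  one_mul : ∀ a : L, 1 * a = a
  mul_one : ∀ a : L, a * 1 = a
  inv_mul_cancel_left : ∀ a x : L, a⁻¹ * (a * x) = x
  mul_inv_cancel_right : ∀ a x : L, (x * a) * a⁻¹ = x

namespace IPLoop

variable {L : Type*} [IPLoop L]

/-- Powers with natural number exponent, `c^(n+1) = c * c^n`. -/
def npow (c : L) : ℕ → L
  | 0 => 1
  | n + 1 => c * npow c n

instance : Pow L ℕ := ⟨npow⟩

/-- Powers with integer exponent. -/
def zpow (c : L) : ℤ → L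
  | Int.ofNat n => c ^ n
  | Int.negSucc n => (c ^ (n + 1))⁻¹

instance : Pow L ℤ := ⟨zpow⟩

/-- The commutator `[c,d] = (dc)⁻¹(cd)`. -/
def comm (c d : L) : L := (d * c)⁻¹ * (c * d)

/-- The associator `[c,d,e] = (c(de))⁻¹((cd)e)`. -/
def assoc (c d e : L) : L := (c * (d * e))⁻¹ * ((c * d) * e)

/-- Membership in the center `Z(L)`. -/
def inCenter (z : L) : Prop :=
  (∀ x : L, comm z x = 1) ∧
  ∀ x y : L, assoc z x y = 1 ∧ assoc x z y = 1 ∧ assoc x y z = 1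

/-- The Moufang identity `((dc)e)c = d(c(ec))`. -/
def IsMoufang (L : Type*) [IPLoop L] : Prop :=
  ∀ c d e : L, ((d * c) * e) * c = d * (c * (e * c))

/-- A loop is of (central nilpotence) class at most 2 if every commutator and
every associator lies in the center. -/
def ClassTwo (L : Type*) [IPLoop L] : Prop :=
  (∀ c d : L, inCenter (comm c d)) ∧ ∀ c d e : L, inCenter (assoc c d e)

/-- The order of an element: least `n > 0` with `c^n = 1` (or `0` if none). -/
noncomputable def ordOf (c : L) : ℕ := sInf {n : ℕ | 0 < n ∧ c ^ n = 1}

/-- The subloop generated by a subset `S`. -/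
def subloopClosure (S : Set L) : Set L :=
  ⋂₀ {T : Set L | (1 : L) ∈ T ∧ (∀ x ∈ T, x⁻¹ ∈ T) ∧
      (∀ x ∈ T, ∀ y ∈ T, x * y ∈ T) ∧ S ⊆ T}

end IPLoop

/-! ### Auxiliary development -/

namespace IPLoopAux

open IPLoop

variable {L : Type*} [IPLoop L]

-- Basic IP loop facts
theorem inv_mul (a : L) : a⁻¹ * a = 1 := by
  have h := IPLoop.inv_mul_cancel_left a 1
  rwa [IPLoop.mul_one] at h

theorem inv_inv (a : L) : a⁻¹⁻¹ = a := by
  have h := IPLoop.inv_mul_cancel_left a⁻¹ a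
  rwa [inv_mul, IPLoop.mul_one] at h

theorem mul_inv (a : L) : a * a⁻¹ = 1 := by
  have h := inv_mul a⁻¹
  rwa [inv_inv] at h

theorem mul_inv_cancel_left (a x : L) : a * (a⁻¹ * x) = x := by
  have h := IPLoop.inv_mul_cancel_left a⁻¹ x
  rwa [inv_inv] at h

theorem inv_mul_cancel_right (a x : L) : (x * a⁻¹) * a = x := by
  have h := IPLoop.mul_inv_cancel_right a⁻¹ x
  rwa [inv_inv] at h

theorem mul_left_cancel {a x y : L} (h : a * x = a * y) : x = y := by
  have := congrArg (a⁻¹ * ·) h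
  simpa [IPLoop.inv_mul_cancel_left] using this

theorem mul_right_cancel {a x y : L} (h : x * a = y * a) : x = y := by
  have := congrArg (· * a⁻¹) h
  simpa [IPLoop.mul_inv_cancel_right] using this

theorem eq_of_inv_mul_eq_one {a b : L} (h : a⁻¹ * b = 1) : b = a := by
  have := congrArg (a * ·) h
  simpa [mul_inv_cancel_left, IPLoop.mul_one] using this

theorem inv_eq_of_mul_eq_one {a b : L} (h : a * b = 1) : b = a⁻¹ := by
  have := congrArg (a⁻¹ * ·) h
  simpa [IPLoop.inv_mul_cancel_left, IPLoop.mul_one] using this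

theorem one_inv : (1 : L)⁻¹ = 1 := by
  have := inv_mul (1 : L)
  rwa [IPLoop.mul_one] at this

/-- Antiautomorphic inverse property. -/
theorem mul_inv_rev (a b : L) : (a * b)⁻¹ = b⁻¹ * a⁻¹ := by
  -- b = a⁻¹ (ab);  (a⁻¹(ab))(ab)⁻¹ = a⁻¹ ; b⁻¹(b (ab)⁻¹... )
  have h1 : a⁻¹ * (a * b) = b := IPLoop.inv_mul_cancel_left a b
  have h2 : (a⁻¹ * (a * b)) * (a * b)⁻¹ = a⁻¹ := IPLoop.mul_inv_cancel_right (a * b) a⁻¹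
  rw [h1] at h2
  have h3 : b⁻¹ * (b * (a * b)⁻¹) = (a * b)⁻¹ := IPLoop.inv_mul_cancel_left b (a * b)⁻¹
  rw [h2] at h3
  exact h3.symm

-- expansions
theorem comm_exp (x y : L) : x * y = (y * x) * comm x y := by
  unfold IPLoop.comm
  rw [mul_inv_cancel_left]

theorem assoc_exp (x y z : L) : (x * y) * z = (x * (y * z)) * assoc x y z := by
  unfold IPLoop.assoc
  rw [mul_inv_cancel_left]

theorem comm_eq_one_iff {x y : L} : comm x y = 1 ↔ x * y = y * x := by
  unfold IPLoop.comm
  constructor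
  · intro h
    have := eq_of_inv_mul_eq_one h
    exact this
  · intro h
    rw [h, inv_mul]

theorem assoc_eq_one_iff {x y z : L} : assoc x y z = 1 ↔ (x * y) * z = x * (y * z) := by
  unfold IPLoop.assoc
  constructor
  · intro h
    exact eq_of_inv_mul_eq_one h
  · intro h
    rw [h, inv_mul]

/-! ### Central elements -/

section Center

theorem cen_comm {z : L} (hz : inCenter z) (x : L) : z * x = x * z :=
  IPLoopAux.comm_eq_one_iff.mp (hz.1 x)

theorem cen_a1 {z : L} (hz : inCenter z) (x y : L) : (z * x) * y = z * (x * y) :=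
  IPLoopAux.assoc_eq_one_iff.mp (hz.2 x y).1

theorem cen_a2 {z : L} (hz : inCenter z) (x y : L) : (x * z) * y = x * (z * y) :=
  IPLoopAux.assoc_eq_one_iff.mp (hz.2 x y).2.1

theorem cen_a3 {z : L} (hz : inCenter z) (x y : L) : (x * y) * z = x * (y * z) :=
  IPLoopAux.assoc_eq_one_iff.mp (hz.2 x y).2.2

/-- Move a central factor from the middle to the right. -/
theorem cen_mid {z : L} (hz : inCenter z) (x y : L) : x * (z * y) = (x * y) * z := by
  rw [cen_comm hz y]
  exact (cen_a3 hz x y).symm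

theorem cen_mid' {z : L} (hz : inCenter z) (x y : L) : (x * z) * y = (x * y) * z := by
  rw [cen_a2 hz, cen_mid hz]

theorem cen_left {z : L} (hz : inCenter z) (x y : L) : z * (x * y) = (x * y) * z :=
  cen_comm hz _

theorem cen_one : inCenter (1 : L) := by
  constructor
  · intro x
    rw [IPLoopAux.comm_eq_one_iff, IPLoop.one_mul, IPLoop.mul_one]
  · intro x y
    refine ⟨?_, ?_, ?_⟩ <;> rw [IPLoopAux.assoc_eq_one_iff] <;>
      simp [IPLoop.one_mul, IPLoop.mul_one]

theorem cen_inv {z : L} (hz : inCenter z) : inCenter z⁻¹ := by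
  have h1 : ∀ x : L, z * (x * z⁻¹) = x := by
    intro x
    rw [← cen_a1 hz, cen_comm hz x, IPLoop.mul_inv_cancel_right]
  have hc : ∀ x : L, z⁻¹ * x = x * z⁻¹ := by
    intro x
    have h2 : z⁻¹ * (z * (x * z⁻¹)) = x * z⁻¹ := IPLoop.inv_mul_cancel_left z _
    rw [h1] at h2
    exact h2
  constructor
  · intro x
    rw [IPLoopAux.comm_eq_one_iff]
    exact hc x
  · intro x y
    refine ⟨?_, ?_, ?_⟩ <;> rw [IPLoopAux.assoc_eq_one_iff]
    · apply IPLoopAux.mul_left_cancel (a := z)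
      rw [← cen_a1 hz, IPLoopAux.mul_inv_cancel_left, IPLoopAux.mul_inv_cancel_left]
    · apply IPLoopAux.mul_left_cancel (a := z)
      rw [← cen_a1 hz, h1, ← cen_a1 hz x, cen_comm hz x, cen_a2 hz,
        IPLoopAux.mul_inv_cancel_left]
    · apply IPLoopAux.mul_right_cancel (a := z)
      rw [IPLoopAux.inv_mul_cancel_right, cen_a3 hz, IPLoopAux.inv_mul_cancel_right]

theorem cen_mul {z w : L} (hz : inCenter z) (hw : inCenter w) : inCenter (z * w) := by
  have hc : ∀ x : L, (z * w) * x = x * (z * w) := by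
    intro x
    rw [cen_a1 hz, cen_comm hw x, ← cen_a1 hz, cen_comm hz, cen_a3 hw]
  constructor
  · intro x
    rw [IPLoopAux.comm_eq_one_iff]
    exact hc x
  · intro x y
    refine ⟨?_, ?_, ?_⟩ <;> rw [IPLoopAux.assoc_eq_one_iff]
    · rw [cen_a1 hz, cen_a1 hz, cen_a2 hw, cen_a1 hw]
    · rw [← cen_a3 hw x z, cen_a2 hw, cen_a2 hz, cen_a1 hz]
    · rw [← cen_a3 hw (x*y) z, cen_a3 hz x y, cen_a3 hw x (y*z), cen_a3 hw y z]

end Center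

/-! ### Invariance of comm and assoc under central perturbation -/

section Invariance

theorem key_inv {z : L} (hz : inCenter z) (u v : L) :
    (u * z)⁻¹ * (v * z) = u⁻¹ * v := by
  rw [IPLoopAux.mul_inv_rev, cen_comm (cen_inv hz), cen_a2 (cen_inv hz),
    ← cen_comm hz v, IPLoop.inv_mul_cancel_left]

theorem assoc_shift1 {z : L} (hz : inCenter z) (x y w : L) :
    assoc (x * z) y w = assoc x y w := by
  unfold IPLoop.assoc
  rw [cen_mid' hz x (y*w), cen_mid' hz x y, cen_mid' hz (x*y) w, key_inv hz]

theorem assoc_shift2 {z : L} (hz : inCenter z) (x y w : L) :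
    assoc x (y * z) w = assoc x y w := by
  unfold IPLoop.assoc
  rw [cen_mid' hz y w, ← cen_a3 hz x (y*w), ← cen_a3 hz x y, cen_mid' hz (x*y) w,
    key_inv hz]

theorem assoc_shift3 {z : L} (hz : inCenter z) (x y w : L) :
    assoc x y (w * z) = assoc x y w := by
  unfold IPLoop.assoc
  rw [← cen_a3 hz y w, ← cen_a3 hz x (y*w), ← cen_a3 hz (x*y) w, key_inv hz]

theorem comm_shift1 {z : L} (hz : inCenter z) (x y : L) :
    comm (x * z) y = comm x y := by
  unfold IPLoop.comm
  rw [← cen_a3 hz y x, cen_mid' hz x y, key_inv hz]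

theorem comm_shift2 {z : L} (hz : inCenter z) (x y : L) :
    comm x (y * z) = comm x y := by
  unfold IPLoop.comm
  rw [cen_mid' hz y x, ← cen_a3 hz x y, key_inv hz]

end Invariance

/-! ### The central quotient and the center group -/

def ceq (x y : L) : Prop := ∃ z : L, inCenter z ∧ y = x * z

theorem ceq_refl (x : L) : ceq x x := ⟨1, cen_one, (IPLoop.mul_one x).symm⟩

theorem ceq_symm {x y : L} : ceq x y → ceq y x := by
  rintro ⟨z, hz, rfl⟩
  exact ⟨z⁻¹, cen_inv hz, (IPLoop.mul_inv_cancel_right z x).symm⟩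

theorem ceq_trans {x y w : L} : ceq x y → ceq y w → ceq x w := by
  rintro ⟨z, hz, rfl⟩ ⟨u, hu, rfl⟩
  exact ⟨z * u, cen_mul hz hu, cen_a2 hz x u⟩

def ceqStd (L : Type*) [IPLoop L] : Setoid L :=
  ⟨ceq, ⟨ceq_refl, ceq_symm, ceq_trans⟩⟩

/-- The quotient of `L` by its center. -/
def Qd (L : Type*) [IPLoop L] (_h2 : ClassTwo L) : Type _ := Quotient (ceqStd L)

/-- The center of `L` as a type. -/
def Zc (L : Type*) [IPLoop L] : Type _ := {z : L // inCenter z}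

namespace Zc

instance : Zero (Zc L) := ⟨⟨1, cen_one⟩⟩
instance : Add (Zc L) := ⟨fun a b => ⟨a.1 * b.1, cen_mul a.2 b.2⟩⟩
instance : Neg (Zc L) := ⟨fun a => ⟨a.1⁻¹, cen_inv a.2⟩⟩

instance : AddCommGroup (Zc L) where
  nsmul := nsmulRec
  zsmul := zsmulRec
  add_assoc a b c := Subtype.ext (cen_a1 a.2 b.1 c.1)
  zero_add a := Subtype.ext (IPLoop.one_mul a.1)
  add_zero a := Subtype.ext (IPLoop.mul_one a.1)
  add_comm a b := Subtype.ext (cen_comm a.2 b.1)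
  neg_add_cancel a := Subtype.ext (IPLoopAux.inv_mul a.1)

theorem val_add (a b : Zc L) : (a + b).1 = a.1 * b.1 := rfl
theorem val_neg (a : Zc L) : (-a).1 = a.1⁻¹ := rfl
theorem val_zero : ((0 : Zc L)).1 = 1 := rfl
theorem val_sub (a b : Zc L) : (a - b).1 = a.1 * b.1⁻¹ := by
  rw [sub_eq_add_neg, val_add, val_neg]

theorem cen_val (a : Zc L) : inCenter a.1 := a.2

theorem val_nsmul (n : ℕ) (a : Zc L) : (n • a).1 = a.1 ^ n := by
  induction n with
  | zero => rw [zero_smul]; rfl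
  | succ n ih =>
    rw [succ_nsmul, val_add, ih]
    exact (cen_comm (cen_val a) (a.1 ^ n)).symm

theorem val_zsmul (n : ℤ) (a : Zc L) : (n • a).1 = a.1 ^ n := by
  cases n with
  | ofNat n =>
    rw [Int.ofNat_eq_coe, natCast_zsmul, val_nsmul]
    rfl
  | negSucc n =>
    rw [negSucc_zsmul, val_neg, val_nsmul]
    rfl

end Zc

namespace Qd

variable {h2 : ClassTwo L}

def mk (h2 : ClassTwo L) (x : L) : Qd L h2 := Quotient.mk (ceqStd L) x

instance : Zero (Qd L h2) := ⟨mk h2 1⟩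

instance : Add (Qd L h2) :=
  ⟨fun q r => Quotient.liftOn₂ q r (fun x y => mk h2 (x * y)) (by
    rintro x y x' y' ⟨z, hz, rfl⟩ ⟨w, hw, rfl⟩
    refine Quotient.sound ⟨z * w, cen_mul hz hw, ?_⟩
    rw [← cen_a3 hw (x*z) y, cen_mid' hz x y, cen_a2 hz (x*y) w])⟩

instance : Neg (Qd L h2) :=
  ⟨fun q => Quotient.liftOn q (fun x => mk h2 x⁻¹) (by
    rintro x x' ⟨z, hz, rfl⟩
    refine Quotient.sound ⟨z⁻¹, cen_inv hz, ?_⟩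
    rw [IPLoopAux.mul_inv_rev, cen_comm (cen_inv hz)])⟩

theorem mk_mul (x y : L) : mk h2 (x * y) = mk h2 x + mk h2 y := rfl
theorem mk_inv (x : L) : mk h2 x⁻¹ = -mk h2 x := rfl
theorem mk_one : mk h2 1 = (0 : Qd L h2) := rfl

instance : AddCommGroup (Qd L h2) where
  nsmul := nsmulRec
  zsmul := zsmulRec
  add_assoc q r s := by
    induction q using Quotient.inductionOn with | _ x =>
    induction r using Quotient.inductionOn with | _ y =>
    induction s using Quotient.inductionOn with | _ z =>
    refine Quotient.sound ⟨(assoc x y z)⁻¹, cen_inv (h2.2 x y z), ?_⟩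
    rw [IPLoopAux.assoc_exp x y z, IPLoop.mul_inv_cancel_right]
  zero_add q := by
    induction q using Quotient.inductionOn with | _ x =>
    exact congrArg (mk h2) (IPLoop.one_mul x)
  add_zero q := by
    induction q using Quotient.inductionOn with | _ x =>
    exact congrArg (mk h2) (IPLoop.mul_one x)
  add_comm q r := by
    induction q using Quotient.inductionOn with | _ x =>
    induction r using Quotient.inductionOn with | _ y =>
    exact Quotient.sound ⟨comm y x, h2.1 y x, IPLoopAux.comm_exp y x⟩
  neg_add_cancel q := by
    induction q using Quotient.inductionOn with | _ x =>
    exact congrArg (mk h2) (IPLoopAux.inv_mul x)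

theorem mk_npow (x : L) (n : ℕ) : mk h2 (x ^ n) = n • mk h2 x := by
  induction n with
  | zero => rw [zero_smul]; rfl
  | succ n ih =>
    rw [show x ^ (n+1) = x * x ^ n from rfl, mk_mul, ih, succ_nsmul, add_comm]

theorem mk_zpow (x : L) (n : ℤ) : mk h2 (x ^ n) = n • mk h2 x := by
  cases n with
  | ofNat n =>
    rw [Int.ofNat_eq_coe, natCast_zsmul]
    exact mk_npow x n
  | negSucc n =>
    rw [negSucc_zsmul, ← mk_npow]
    exact mk_inv (x ^ (n+1))

end Qd

/-- Associator on the central quotient, valued in the center. -/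
def Av (h2 : ClassTwo L) (q r s : Qd L h2) : Zc L :=
  Quotient.liftOn q
    (fun x => Quotient.liftOn₂ r s
      (fun y z => (⟨assoc x y z, h2.2 x y z⟩ : Zc L))
      (by
        rintro y z y' z' ⟨w, hw, rfl⟩ ⟨u, hu, rfl⟩
        exact Subtype.ext (by
          show assoc x y z = assoc x (y * w) (z * u)
          rw [assoc_shift2 hw, assoc_shift3 hu])))
    (by
      rintro x x' ⟨w, hw, rfl⟩
      induction r using Quotient.inductionOn with | _ y =>
      induction s using Quotient.inductionOn with | _ z =>
      exact Subtype.ext (by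
        show assoc x y z = assoc (x * w) y z
        rw [assoc_shift1 hw]))

/-- Commutator on the central quotient, valued in the center. -/
def Cv (h2 : ClassTwo L) (q r : Qd L h2) : Zc L :=
  Quotient.liftOn₂ q r
    (fun x y => (⟨comm x y, h2.1 x y⟩ : Zc L))
    (by
      rintro x y x' y' ⟨w, hw, rfl⟩ ⟨u, hu, rfl⟩
      exact Subtype.ext (by
        show comm x y = comm (x * w) (y * u)
        rw [comm_shift1 hw, comm_shift2 hu]))

theorem Av_mk (h2 : ClassTwo L) (x y z : L) :
    (Av h2 (Qd.mk h2 x) (Qd.mk h2 y) (Qd.mk h2 z)).1 = assoc x y z := rfl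

theorem Cv_mk (h2 : ClassTwo L) (x y : L) :
    (Cv h2 (Qd.mk h2 x) (Qd.mk h2 y)).1 = comm x y := rfl

/-! ### Loop-level identities -/

section LoopLevel

-- trivial associators
theorem assoc_one_left (x y : L) : assoc 1 x y = 1 := by
  rw [IPLoopAux.assoc_eq_one_iff, IPLoop.one_mul, IPLoop.one_mul]
theorem assoc_one_mid (x y : L) : assoc x 1 y = 1 := by
  rw [IPLoopAux.assoc_eq_one_iff, IPLoop.mul_one, IPLoop.one_mul]
theorem assoc_one_right (x y : L) : assoc x y 1 = 1 := by
  rw [IPLoopAux.assoc_eq_one_iff, IPLoop.mul_one, IPLoop.mul_one]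
theorem assoc_inv_right (x y : L) : assoc x y y⁻¹ = 1 := by
  rw [IPLoopAux.assoc_eq_one_iff, IPLoop.mul_inv_cancel_right, IPLoopAux.mul_inv,
    IPLoop.mul_one]
theorem assoc_inv_right' (x y : L) : assoc x y⁻¹ y = 1 := by
  rw [IPLoopAux.assoc_eq_one_iff, IPLoopAux.inv_mul_cancel_right, IPLoopAux.inv_mul,
    IPLoop.mul_one]
theorem assoc_inv_left (x y : L) : assoc x x⁻¹ y = 1 := by
  rw [IPLoopAux.assoc_eq_one_iff, IPLoopAux.mul_inv, IPLoop.one_mul,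
    IPLoopAux.mul_inv_cancel_left]
theorem assoc_inv_left' (x y : L) : assoc x⁻¹ x y = 1 := by
  rw [IPLoopAux.assoc_eq_one_iff, IPLoopAux.inv_mul, IPLoop.one_mul,
    IPLoop.inv_mul_cancel_left]

theorem comm_one_left (y : L) : comm 1 y = 1 := by
  rw [IPLoopAux.comm_eq_one_iff, IPLoop.one_mul, IPLoop.mul_one]

theorem comm_antisym (c d : L) : comm c d = (comm d c)⁻¹ := by
  unfold IPLoop.comm
  rw [IPLoopAux.mul_inv_rev ((c*d)⁻¹) (d*c), IPLoopAux.inv_inv]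

variable (hM : IsMoufang L)
include hM

theorem flex (c e : L) : (c * e) * c = c * (e * c) := by
  have h := hM c 1 e
  rwa [IPLoop.one_mul, IPLoop.one_mul] at h

theorem assoc_flex (c e : L) : assoc c e c = 1 := by
  rw [IPLoopAux.assoc_eq_one_iff]; exact flex hM c e

theorem assoc_ralt (d c : L) : assoc d c c = 1 := by
  rw [IPLoopAux.assoc_eq_one_iff]
  have h := hM c d 1
  rwa [IPLoop.mul_one, IPLoop.one_mul] at h

/-- The left Moufang identity. -/
theorem moufang_left (c d e : L) : ((c * e) * c) * d = c * (e * (c * d)) := by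
  have h := hM c⁻¹ d⁻¹ e⁻¹
  have h2 := congrArg (·⁻¹) h
  simp only [IPLoopAux.mul_inv_rev, IPLoopAux.inv_inv] at h2
  exact h2.symm

theorem assoc_lalt (c d : L) : assoc c c d = 1 := by
  rw [IPLoopAux.assoc_eq_one_iff]
  have h := moufang_left hM c d 1
  rwa [IPLoop.mul_one, IPLoop.one_mul] at h

end LoopLevel

section LoopSchemas

variable (hM : IsMoufang L) (h2 : ClassTwo L)
include hM h2

/-- Loop-level T1 (from the left Moufang identity). -/
theorem t1L (c x d : L) : assoc c x d = (assoc (x * c⁻¹) c d)⁻¹ := by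
  set E := x * c⁻¹ with hE
  have hEc : E * c = x := IPLoopAux.inv_mul_cancel_right c x
  have h := moufang_left hM c d E
  rw [flex hM c E, hEc] at h
  -- h : (c * x) * d = c * (E * (c * d))
  have h1 : (c * x) * d = (c * (x * d)) * assoc c x d := IPLoopAux.assoc_exp c x d
  have h2' : (E * c) * d = (E * (c * d)) * assoc E c d := IPLoopAux.assoc_exp E c d
  rw [hEc] at h2'
  have h3 : E * (c * d) = (x * d) * (assoc E c d)⁻¹ := by
    rw [h2', IPLoop.mul_inv_cancel_right]
  rw [h3, ← cen_a3 (cen_inv (h2.2 E c d)) c (x * d)] at h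
  rw [h1] at h
  exact IPLoopAux.mul_left_cancel h

omit h2 in
/-- Loop-level M' (from the Moufang identity). -/
theorem mL (u v w : L) : assoc u v w = (assoc (u * w⁻¹) w (v * w))⁻¹ := by
  set D := u * w⁻¹ with hD
  have hDw : D * w = u := IPLoopAux.inv_mul_cancel_right w u
  have h := hM w D v
  rw [hDw] at h
  -- h : (u * v) * w = D * (w * (v * w))
  have h1 : (u * v) * w = (u * (v * w)) * assoc u v w := IPLoopAux.assoc_exp u v w
  have h2' : (D * w) * (v * w) = (D * (w * (v * w))) * assoc D w (v * w) :=
    IPLoopAux.assoc_exp D w (v * w)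
  rw [hDw] at h2'
  have h3 : D * (w * (v * w)) = (u * (v * w)) * (assoc D w (v * w))⁻¹ := by
    rw [h2', IPLoop.mul_inv_cancel_right]
  rw [h3, h1] at h
  exact IPLoopAux.mul_left_cancel h

end LoopSchemas

section LoopStar

variable (h2 : ClassTwo L)
include h2

/-- Loop-level inverse-reversal identity for associators. -/
theorem starL (c d e : L) : assoc c d e = assoc e⁻¹ d⁻¹ c⁻¹ := by
  have h := congrArg (·⁻¹) (IPLoopAux.assoc_exp c d e)
  simp only [IPLoopAux.mul_inv_rev] at h
  -- h : e⁻¹ * (d⁻¹ * c⁻¹) = (assoc c d e)⁻¹ * ((e⁻¹ * d⁻¹) * c⁻¹)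
  have h2' : (e⁻¹ * d⁻¹) * c⁻¹ = (e⁻¹ * (d⁻¹ * c⁻¹)) * assoc e⁻¹ d⁻¹ c⁻¹ :=
    IPLoopAux.assoc_exp e⁻¹ d⁻¹ c⁻¹
  rw [h2'] at h
  set U := e⁻¹ * (d⁻¹ * c⁻¹)
  set A := assoc c d e
  set A' := assoc e⁻¹ d⁻¹ c⁻¹
  -- h : U = A⁻¹ * (U * A')
  have hA : inCenter A := h2.2 c d e
  have hA' : inCenter A' := h2.2 e⁻¹ d⁻¹ c⁻¹
  have h4 : A⁻¹ * (U * A') = (U * A') * A⁻¹ := cen_comm (cen_inv hA) _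
  rw [h4, cen_a3 (cen_inv hA) U A'] at h
  -- h : U = U * (A' * A⁻¹)
  have h5 : U * 1 = U * (A' * A⁻¹) := by rw [IPLoop.mul_one]; exact h
  have h6 : (1 : L) = A' * A⁻¹ := IPLoopAux.mul_left_cancel h5
  have h7 : A⁻¹ = A'⁻¹ := IPLoopAux.inv_eq_of_mul_eq_one h6.symm
  have := congrArg (·⁻¹) h7
  simpa only [IPLoopAux.inv_inv] using this

end LoopStar

section LoopCocycle

variable (h2 : ClassTwo L)
include h2

/-- Loop-level associator cocycle identity. -/
theorem cocL (c d e f : L) :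
    (assoc d e f * assoc c (d * e) f) * assoc c d e =
      assoc c d (e * f) * assoc (c * d) e f := by
  have hA1 := h2.2 c d e
  have hA2 := h2.2 c (d * e) f
  have hA3 := h2.2 d e f
  have hA4 := h2.2 (c * d) e f
  have hA5 := h2.2 c d (e * f)
  have r1 : ((c * d) * e) * f =
      (c * (d * (e * f))) * ((assoc d e f * assoc c (d * e) f) * assoc c d e) := by
    calc ((c * d) * e) * f
        = ((c * (d * e)) * assoc c d e) * f := by rw [← IPLoopAux.assoc_exp c d e]
      _ = ((c * (d * e)) * f) * assoc c d e := cen_mid' hA1 _ f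
      _ = ((c * ((d * e) * f)) * assoc c (d * e) f) * assoc c d e := by
          rw [IPLoopAux.assoc_exp c (d * e) f]
      _ = ((c * ((d * (e * f)) * assoc d e f)) * assoc c (d * e) f) * assoc c d e := by
          rw [← IPLoopAux.assoc_exp d e f]
      _ = (((c * (d * (e * f))) * assoc d e f) * assoc c (d * e) f) * assoc c d e := by
          rw [← cen_a3 hA3 c (d * (e * f))]
      _ = ((c * (d * (e * f))) * (assoc d e f * assoc c (d * e) f)) * assoc c d e := by
          rw [cen_a3 hA2 (c * (d * (e * f))) (assoc d e f)]
      _ = (c * (d * (e * f))) * ((assoc d e f * assoc c (d * e) f) * assoc c d e) := by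
          rw [cen_a3 hA1 (c * (d * (e * f))) (assoc d e f * assoc c (d * e) f)]
  have r2 : ((c * d) * e) * f =
      (c * (d * (e * f))) * (assoc c d (e * f) * assoc (c * d) e f) := by
    calc ((c * d) * e) * f
        = ((c * d) * (e * f)) * assoc (c * d) e f := IPLoopAux.assoc_exp (c * d) e f
      _ = ((c * (d * (e * f))) * assoc c d (e * f)) * assoc (c * d) e f := by
          rw [← IPLoopAux.assoc_exp c d (e * f)]
      _ = (c * (d * (e * f))) * (assoc c d (e * f) * assoc (c * d) e f) := by
          rw [cen_a3 hA4 (c * (d * (e * f))) (assoc c d (e * f))]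
  exact IPLoopAux.mul_left_cancel (r1.symm.trans r2)

/-- Loop-level commutator expansion. -/
theorem c2L (c d e : L) :
    comm (c * d) e =
      (((assoc e c d * comm c e) * (assoc c e d)⁻¹) * comm d e) * assoc c d e := by
  have hA1 := h2.2 c d e
  have hA2 := h2.2 c e d
  have hA3 := h2.2 e c d
  have hC1 := h2.1 d e
  have hC2 := h2.1 c e
  have r1 : (c * d) * e =
      (e * (c * d)) * ((((assoc e c d * comm c e) * (assoc c e d)⁻¹) * comm d e) * assoc c d e) := by
    calc (c * d) * e
        = (c * (d * e)) * assoc c d e := IPLoopAux.assoc_exp c d e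
      _ = (c * ((e * d) * comm d e)) * assoc c d e := by rw [← IPLoopAux.comm_exp d e]
      _ = ((c * (e * d)) * comm d e) * assoc c d e := by rw [← cen_a3 hC1 c (e * d)]
      _ = ((((c * e) * d) * (assoc c e d)⁻¹) * comm d e) * assoc c d e := by
          rw [IPLoopAux.assoc_exp c e d, IPLoop.mul_inv_cancel_right]
      _ = ((((((e * c) * comm c e) * d)) * (assoc c e d)⁻¹) * comm d e) * assoc c d e := by
          rw [← IPLoopAux.comm_exp c e]
      _ = (((((e * c) * d) * comm c e) * (assoc c e d)⁻¹) * comm d e) * assoc c d e := by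
          rw [cen_mid' hC2 (e * c) d]
      _ = ((((((e * (c * d)) * assoc e c d)) * comm c e) * (assoc c e d)⁻¹) * comm d e) * assoc c d e := by
          rw [← IPLoopAux.assoc_exp e c d]
      _ = (e * (c * d)) * ((((assoc e c d * comm c e) * (assoc c e d)⁻¹) * comm d e) * assoc c d e) := by
          rw [cen_a3 hC2 (e * (c * d)) (assoc e c d),
            cen_a3 (cen_inv hA2) (e * (c * d)) (assoc e c d * comm c e),
            cen_a3 hC1 (e * (c * d)) ((assoc e c d * comm c e) * (assoc c e d)⁻¹),
            cen_a3 hA1 (e * (c * d)) (((assoc e c d * comm c e) * (assoc c e d)⁻¹) * comm d e)]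
  have r2 : (c * d) * e = (e * (c * d)) * comm (c * d) e := IPLoopAux.comm_exp (c * d) e
  exact IPLoopAux.mul_left_cancel (r2.symm.trans r1)

end LoopCocycle

/-! ### Schema lemmas on the central quotient -/

section QSchemas

variable {h2 : ClassTwo L}

theorem Av_congr {a a' b b' c c' : Qd L h2} (ha : a = a') (hb : b = b') (hc : c = c') :
    Av h2 a b c = Av h2 a' b' c' := by rw [ha, hb, hc]

theorem zero1Q (r s : Qd L h2) : Av h2 0 r s = 0 := by
  induction r using Quotient.inductionOn with | _ d =>
  induction s using Quotient.inductionOn with | _ e =>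
  exact Subtype.ext (assoc_one_left d e)

theorem zero2Q (r s : Qd L h2) : Av h2 r 0 s = 0 := by
  induction r using Quotient.inductionOn with | _ d =>
  induction s using Quotient.inductionOn with | _ e =>
  exact Subtype.ext (assoc_one_mid d e)

theorem zero3Q (r s : Qd L h2) : Av h2 r s 0 = 0 := by
  induction r using Quotient.inductionOn with | _ d =>
  induction s using Quotient.inductionOn with | _ e =>
  exact Subtype.ext (assoc_one_right d e)

theorem can1Q (q r : Qd L h2) : Av h2 q (-q) r = 0 := by
  induction q using Quotient.inductionOn with | _ c =>
  induction r using Quotient.inductionOn with | _ e =>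
  exact Subtype.ext (assoc_inv_left c e)

theorem can2Q (q r : Qd L h2) : Av h2 (-q) q r = 0 := by
  induction q using Quotient.inductionOn with | _ c =>
  induction r using Quotient.inductionOn with | _ e =>
  exact Subtype.ext (assoc_inv_left' c e)

theorem can3Q (q r : Qd L h2) : Av h2 q r (-r) = 0 := by
  induction q using Quotient.inductionOn with | _ c =>
  induction r using Quotient.inductionOn with | _ e =>
  exact Subtype.ext (assoc_inv_right c e)

theorem can4Q (q r : Qd L h2) : Av h2 q (-r) r = 0 := by
  induction q using Quotient.inductionOn with | _ c =>
  induction r using Quotient.inductionOn with | _ e =>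
  exact Subtype.ext (assoc_inv_right' c e)

theorem cantiQ (q r : Qd L h2) : Cv h2 q r = -Cv h2 r q := by
  induction q using Quotient.inductionOn with | _ c =>
  induction r using Quotient.inductionOn with | _ d =>
  exact Subtype.ext (comm_antisym c d)

theorem czeroQ (r : Qd L h2) : Cv h2 0 r = 0 := by
  induction r using Quotient.inductionOn with | _ d =>
  exact Subtype.ext (comm_one_left d)

theorem starQ (q r s : Qd L h2) : Av h2 q r s = Av h2 (-s) (-r) (-q) := by
  induction q using Quotient.inductionOn with | _ c =>
  induction r using Quotient.inductionOn with | _ d =>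
  induction s using Quotient.inductionOn with | _ e =>
  exact Subtype.ext (starL h2 c d e)

theorem cocQ (q r s t : Qd L h2) :
    (Av h2 r s t + Av h2 q (r + s) t) + Av h2 q r s =
      Av h2 q r (s + t) + Av h2 (q + r) s t := by
  induction q using Quotient.inductionOn with | _ c =>
  induction r using Quotient.inductionOn with | _ d =>
  induction s using Quotient.inductionOn with | _ e =>
  induction t using Quotient.inductionOn with | _ f =>
  exact Subtype.ext (cocL h2 c d e f)

theorem c2Q (q r s : Qd L h2) :
    Cv h2 (q + r) s =
      (((Av h2 s q r + Cv h2 q s) + (-Av h2 q s r)) + Cv h2 r s) + Av h2 q r s := by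
  induction q using Quotient.inductionOn with | _ c =>
  induction r using Quotient.inductionOn with | _ d =>
  induction s using Quotient.inductionOn with | _ e =>
  exact Subtype.ext (c2L h2 c d e)

variable (hM : IsMoufang L)
include hM

theorem alt1Q (q r : Qd L h2) : Av h2 q q r = 0 := by
  induction q using Quotient.inductionOn with | _ c =>
  induction r using Quotient.inductionOn with | _ e =>
  exact Subtype.ext (assoc_lalt hM c e)

theorem alt2Q (q r : Qd L h2) : Av h2 q r q = 0 := by
  induction q using Quotient.inductionOn with | _ c =>
  induction r using Quotient.inductionOn with | _ e =>
  exact Subtype.ext (assoc_flex hM c e)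

theorem alt3Q (q r : Qd L h2) : Av h2 r q q = 0 := by
  induction q using Quotient.inductionOn with | _ c =>
  induction r using Quotient.inductionOn with | _ e =>
  exact Subtype.ext (assoc_ralt hM e c)

theorem t1Q (q r s : Qd L h2) : Av h2 q r s = -Av h2 (r - q) q s := by
  induction q using Quotient.inductionOn with | _ c =>
  induction r using Quotient.inductionOn with | _ d =>
  induction s using Quotient.inductionOn with | _ e =>
  exact Subtype.ext (t1L hM h2 c d e)

theorem mQ (q r s : Qd L h2) : Av h2 q r s = -Av h2 (q - s) s (r + s) := by
  induction q using Quotient.inductionOn with | _ c =>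
  induction r using Quotient.inductionOn with | _ d =>
  induction s using Quotient.inductionOn with | _ e =>
  exact Subtype.ext (mL hM c d e)

end QSchemas

section Skew

variable {h2 : ClassTwo L} (hM : IsMoufang L)
include hM

theorem sk12Q (q r s : Qd L h2) : Av h2 q r s = -Av h2 r q s := by
  have e1 : Av h2 q r s = -Av h2 (r - q) q s :=
    (t1Q hM q r s).trans (congrArg Neg.neg (Av_congr (by abel) (by abel) (by abel)))
  have e2 : Av h2 (r - q) q s = -Av h2 (r - q - s) s (q + s) :=
    (mQ hM (r - q) q s).trans (congrArg Neg.neg (Av_congr (by abel) (by abel) (by abel)))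
  have e3 : Av h2 (r - q - s) s (q + s) = -Av h2 (q + s + s - r) (r - q - s) (q + s) :=
    (t1Q hM (r - q - s) s (q + s)).trans (congrArg Neg.neg (Av_congr (by abel) (by abel) (by abel)))
  have e4 : Av h2 (q + s + s - r) (r - q - s) (q + s) = Av h2 (-q - s) (q + s - r) (r - q - s - s) :=
    (starQ (q + s + s - r) (r - q - s) (q + s)).trans (Av_congr (by abel) (by abel) (by abel))
  have e5 : Av h2 (-q - s) (q + s - r) (r - q - s - s) = -Av h2 (s - r) (r - q - s - s) (-s) :=
    (mQ hM (-q - s) (q + s - r) (r - q - s - s)).trans (congrArg Neg.neg (Av_congr (by abel) (by abel) (by abel)))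
  have e6 : Av h2 (s - r) (r - q - s - s) (-s) = Av h2 s (q + s + s - r) (r - s) :=
    (starQ (s - r) (r - q - s - s) (-s)).trans (Av_congr (by abel) (by abel) (by abel))
  have e7 : Av h2 s (q + s + s - r) (r - s) = -Av h2 (s + s - r) (r - s) (q + s) :=
    (mQ hM s (q + s + s - r) (r - s)).trans (congrArg Neg.neg (Av_congr (by abel) (by abel) (by abel)))
  have f1 : Av h2 r q s = -Av h2 (r - s) s (q + s) :=
    (mQ hM r q s).trans (congrArg Neg.neg (Av_congr (by abel) (by abel) (by abel)))
  have f2 : Av h2 (r - s) s (q + s) = -Av h2 (s + s - r) (r - s) (q + s) :=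
    (t1Q hM (r - s) s (q + s)).trans (congrArg Neg.neg (Av_congr (by abel) (by abel) (by abel)))
  rw [e1, e2, e3, e4, e5, e6, e7, f1, f2]
  abel

theorem sh12Q (q r s : Qd L h2) : Av h2 (q + r) r s = Av h2 q r s := by
  have a : Av h2 r (q + r) s = -Av h2 q r s :=
    (t1Q hM r (q + r) s).trans (congrArg Neg.neg (Av_congr (by abel) rfl rfl))
  have b : Av h2 r (q + r) s = -Av h2 (q + r) r s := sk12Q hM r (q + r) s
  exact neg_injective (b.symm.trans a)

theorem sh21Q (q r s : Qd L h2) : Av h2 q (r + q) s = Av h2 q r s := by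
  have a : Av h2 q (r + q) s = -Av h2 r q s :=
    (t1Q hM q (r + q) s).trans (congrArg Neg.neg (Av_congr (by abel) rfl rfl))
  rw [a, sk12Q hM r q s, neg_neg]

omit hM in
theorem e26Q (q r s : Qd L h2) : Av h2 q (-q + r) s = -Av h2 (-q) r s := by
  have h := cocQ (h2 := h2) q (-q) r s
  rw [can1Q q r, can1Q q (r + s), show q + -q = (0 : Qd L h2) by abel, zero1Q] at h
  rw [add_zero, zero_add] at h
  exact eq_neg_of_add_eq_zero_right h

theorem neg1Q (q r s : Qd L h2) : Av h2 (-q) r s = -Av h2 q r s := by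
  have a := e26Q q r s
  have b : Av h2 q (-q + r) s = Av h2 q r s := by
    have c := sh21Q hM q (-q + r) s
    have d : Av h2 q ((-q + r) + q) s = Av h2 q r s := Av_congr rfl (by abel) rfl
    exact c.symm.trans d
  rw [b] at a
  rw [a, neg_neg]

theorem neg2Q (q r s : Qd L h2) : Av h2 q (-r) s = -Av h2 q r s := by
  rw [sk12Q hM q (-r) s, neg1Q hM r q s, neg_neg, sk12Q hM r q s]

theorem neg3Q (q r s : Qd L h2) : Av h2 q r (-s) = -Av h2 q r s := by
  have a : Av h2 q r (-s) = Av h2 s (-r) (-q) :=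
    (starQ q r (-s)).trans (Av_congr (by abel) rfl rfl)
  have b : Av h2 q r s = -Av h2 s (-r) (-q) := (starQ q r s).trans (neg1Q hM s (-r) (-q))
  rw [a, b, neg_neg]

theorem sk13Q (q r s : Qd L h2) : Av h2 q r s = -Av h2 s r q := by
  calc Av h2 q r s = Av h2 (-s) (-r) (-q) := starQ q r s
    _ = -Av h2 s (-r) (-q) := neg1Q hM s (-r) (-q)
    _ = -(-Av h2 s r (-q)) := by rw [neg2Q hM s r (-q)]
    _ = Av h2 s r (-q) := neg_neg _
    _ = -Av h2 s r q := neg3Q hM s r q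

theorem cycQ (q r s : Qd L h2) : Av h2 q r s = Av h2 s q r := by
  rw [sk12Q hM q r s, sk13Q hM r q s, neg_neg]

theorem sk23Q (q r s : Qd L h2) : Av h2 q r s = -Av h2 q s r := by
  rw [cycQ hM q r s, sk12Q hM s q r]

theorem sh23Q (q r s : Qd L h2) : Av h2 q (r + s) s = Av h2 q r s := by
  rw [sk13Q hM q (r + s) s, sh21Q hM s r q, sk13Q hM q r s]

theorem sh31Q (q r s : Qd L h2) : Av h2 q r (s + q) = Av h2 q r s := by
  rw [cycQ hM q r (s + q), sh12Q hM s q r, cycQ hM q r s]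

theorem sh32Q (q r s : Qd L h2) : Av h2 q r (s + r) = Av h2 q r s := by
  rw [cycQ hM q r (s + r), sk12Q hM (s + r) q r, sh23Q hM q s r, sk23Q hM q r s]

theorem sh13Q (q r s : Qd L h2) : Av h2 (q + s) r s = Av h2 q r s := by
  rw [sk13Q hM (q + s) r s, sh31Q hM s r q, sk13Q hM q r s]

theorem id1Q (q r s t : Qd L h2) :
    Av h2 q (r + s) t + Av h2 q (r + s) t =
      (((Av h2 (q + r) s t + Av h2 (q + s) r t) + Av h2 (q + s) r t) + Av h2 q s t) + Av h2 r s t := by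
  have w2 := cocQ (h2 := h2) q r s t
  have w7 := cocQ (h2 := h2) q s r t
  rw [show Av h2 s r t = -(Av h2 r s t) from sk12Q hM s r t,
      show Av h2 q (s + r) t = Av h2 q (r + s) t from Av_congr rfl (by abel) rfl,
      show Av h2 q s r = -(Av h2 q r s) from sk23Q hM q s r] at w7
  have w8 := cocQ (h2 := h2) q s t r
  rw [show Av h2 s t r = Av h2 r s t from cycQ hM s t r,
      show Av h2 q (s + t) r = -(Av h2 q r (s + t)) from sk23Q hM q (s + t) r,
      show Av h2 q s (t + r) = Av h2 q s (r + t) from Av_congr rfl rfl (by abel),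
      show Av h2 (q + s) t r = -(Av h2 (q + s) r t) from sk23Q hM (q + s) t r] at w8
  have key : (Av h2 q (r + s) t + Av h2 q (r + s) t) - ((((Av h2 (q + r) s t + Av h2 (q + s) r t) + Av h2 (q + s) r t) + Av h2 q s t) + Av h2 r s t) =
      ((((Av h2 r s t + Av h2 q (r + s) t) + Av h2 q r s) - (Av h2 q r (s + t) + Av h2 (q + r) s t)) + (((-(Av h2 r s t) + Av h2 q (r + s) t) + -(Av h2 q r s)) - (Av h2 q s (r + t) + Av h2 (q + s) r t))) - (((Av h2 r s t + -(Av h2 q r (s + t))) + Av h2 q s t) - (Av h2 q s (r + t) + -(Av h2 (q + s) r t))) := by abel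
  rw [w2, w7, w8] at key
  simp only [sub_self, add_zero, zero_add, sub_zero, zero_sub, neg_zero] at key
  exact sub_eq_zero.mp key

theorem id2Q (q r s t : Qd L h2) :
    Av h2 q (r + s) t = Av h2 (q + r) s t + Av h2 (q + s) r t := by
  have w1 := cocQ (h2 := h2) q r (s + t) s
  rw [show Av h2 r (s + t) s = -(Av h2 r s t) from ((Av_congr rfl (by abel) rfl).trans (sh23Q hM r t s)).trans (sk23Q hM r t s),
      show Av h2 q (r + (s + t)) s = -(Av h2 q s (r + t)) from ((Av_congr rfl (by abel) rfl).trans (sh23Q hM q (r + t) s)).trans (sk23Q hM q (r + t) s),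
      show Av h2 q r ((s + t) + s) = Av h2 q r (s + s + t) from Av_congr rfl rfl (by abel),
      show Av h2 (q + r) (s + t) s = -(Av h2 (q + r) s t) from ((Av_congr rfl (by abel) rfl).trans (sh23Q hM (q + r) t s)).trans (sk23Q hM (q + r) t s)] at w1
  have w3 := cocQ (h2 := h2) q r t (q + r + s)
  rw [show Av h2 r t (q + r + s) = Av h2 (q + s) r t from ((Av_congr rfl rfl (by abel)).trans (sh31Q hM r t (q + s))).trans (cycQ hM r t (q + s)),
      show Av h2 q (r + t) (q + r + s) = Av h2 q (r + t) (s - t) from (((Av_congr rfl rfl (by abel)).trans (sh31Q hM q (r + t) (r + s))).trans (Av_congr rfl rfl (by abel))).trans (sh32Q hM q (r + t) (s - t)),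
      show Av h2 q r (t + (q + r + s)) = Av h2 q r (s + t) from (((Av_congr rfl rfl (by abel)).trans (sh31Q hM q r (r + s + t))).trans (Av_congr rfl rfl (by abel))).trans (sh32Q hM q r (s + t)),
      show Av h2 (q + r) t (q + r + s) = -(Av h2 (q + r) s t) from ((Av_congr rfl rfl (by abel)).trans (sh31Q hM (q + r) t s)).trans (sk23Q hM (q + r) t s)] at w3
  have w4 := cocQ (h2 := h2) q r t s
  rw [show Av h2 r t s = -(Av h2 r s t) from sk23Q hM r t s,
      show Av h2 q (r + t) s = -(Av h2 q s (r + t)) from sk23Q hM q (r + t) s,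
      show Av h2 q r (t + s) = Av h2 q r (s + t) from Av_congr rfl rfl (by abel),
      show Av h2 (q + r) t s = -(Av h2 (q + r) s t) from sk23Q hM (q + r) t s] at w4
  have w5 := cocQ (h2 := h2) q r s (r + s + t)
  rw [show Av h2 r s (r + s + t) = Av h2 r s t from (((Av_congr rfl rfl (by abel)).trans (sh31Q hM r s (s + t))).trans (Av_congr rfl rfl (by abel))).trans (sh32Q hM r s t),
      show Av h2 q (r + s) (r + s + t) = Av h2 q (r + s) t from (Av_congr rfl rfl (by abel)).trans (sh32Q hM q (r + s) t),
      show Av h2 q r (s + (r + s + t)) = Av h2 q r (s + s + t) from (Av_congr rfl rfl (by abel)).trans (sh32Q hM q r (s + s + t)),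
      show Av h2 (q + r) s (r + s + t) = -(Av h2 (q - t) (r + t) s) from (((Av_congr rfl rfl (by abel)).trans (sh32Q hM (q + r) s (r + t))).trans (Av_congr (by abel) rfl rfl)).trans ((sh13Q hM (q - t) s (r + t)).trans (sk23Q hM (q - t) s (r + t)))] at w5
  have w6 := cocQ (h2 := h2) q r s (r + t)
  rw [show Av h2 r s (r + t) = Av h2 r s t from (Av_congr rfl rfl (by abel)).trans (sh31Q hM r s t),
      show Av h2 q (r + s) (r + t) = -(Av h2 q (r + t) (s - t)) from ((Av_congr rfl (by abel) rfl).trans (sh23Q hM q (s - t) (r + t))).trans (sk23Q hM q (s - t) (r + t)),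
      show Av h2 q r (s + (r + t)) = Av h2 q r (s + t) from (Av_congr rfl rfl (by abel)).trans (sh32Q hM q r (s + t)),
      show Av h2 (q + r) s (r + t) = -(Av h2 (q - t) (r + t) s) from ((Av_congr (by abel) rfl rfl).trans (sh13Q hM (q - t) s (r + t))).trans (sk23Q hM (q - t) s (r + t))] at w6
  have key : Av h2 q (r + s) t - (Av h2 (q + r) s t + Av h2 (q + s) r t) =
      ((((((-(Av h2 r s t) + -(Av h2 q s (r + t))) + Av h2 q r t) - (Av h2 q r (s + t) + -(Av h2 (q + r) s t))) + (((Av h2 r s t + Av h2 q (r + s) t) + Av h2 q r s) - (Av h2 q r (s + s + t) + -(Av h2 (q - t) (r + t) s)))) - (((-(Av h2 r s t) + -(Av h2 q s (r + t))) + Av h2 q r (s + t)) - (Av h2 q r (s + s + t) + -(Av h2 (q + r) s t)))) - (((Av h2 (q + s) r t + Av h2 q (r + t) (s - t)) + Av h2 q r t) - (Av h2 q r (s + t) + -(Av h2 (q + r) s t)))) - (((Av h2 r s t + -(Av h2 q (r + t) (s - t))) + Av h2 q r s) - (Av h2 q r (s + t) + -(Av h2 (q - t) (r + t) s))) := by 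abel
  rw [w1, w3, w4, w5, w6] at key
  simp only [sub_self, add_zero, zero_add, sub_zero, zero_sub, neg_zero] at key
  exact sub_eq_zero.mp key

theorem linQ (q r s t : Qd L h2) :
    Av h2 (q + r) s t = Av h2 q s t + Av h2 r s t := by
  have i1 := id1Q hM q r s t
  have i2 := id2Q hM q r s t
  rw [i2] at i1
  have key : Av h2 (q + r) s t - (Av h2 q s t + Av h2 r s t) =
      ((Av h2 (q + r) s t + Av h2 (q + s) r t) + (Av h2 (q + r) s t + Av h2 (q + s) r t)) -
        ((((Av h2 (q + r) s t + Av h2 (q + s) r t) + Av h2 (q + s) r t) + Av h2 q s t) + Av h2 r s t) := by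
    abel
  rw [i1, sub_self] at key
  exact sub_eq_zero.mp key

theorem cyc2Q (q r s : Qd L h2) : Av h2 q r s = Av h2 r s q :=
  (cycQ hM q r s).trans (cycQ hM s q r)

theorem c3Q (q r s : Qd L h2) :
    Cv h2 (q + r) s =
      (Cv h2 q s + Cv h2 r s) + ((Av h2 q r s + Av h2 q r s) + Av h2 q r s) := by
  have h := c2Q (h2 := h2) q r s
  rw [← cycQ hM q r s, sk23Q hM q s r, neg_neg] at h
  exact h.trans (by abel)

theorem cnegQ (q r : Qd L h2) : Cv h2 (-q) r = -Cv h2 q r := by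
  have h := c2Q (h2 := h2) q (-q) r
  rw [can3Q r q, can1Q q r, show q + -q = (0 : Qd L h2) by abel, czeroQ,
      cycQ hM q r (-q), can2Q q r] at h
  simp only [zero_add, add_zero, neg_zero] at h
  exact eq_neg_of_add_eq_zero_right h.symm

theorem smul1Q (n : ℤ) (q r s : Qd L h2) : Av h2 (n • q) r s = n • Av h2 q r s := by
  have aN : ∀ m : ℕ, Av h2 (m • q) r s = m • Av h2 q r s := by
    intro m
    induction m with
    | zero => rw [zero_smul, zero_smul, zero1Q]
    | succ m ih => rw [succ_nsmul, succ_nsmul, linQ hM (m • q) q r s, ih]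
  cases n with
  | ofNat m => rw [Int.ofNat_eq_coe, natCast_zsmul, natCast_zsmul, aN]
  | negSucc m => rw [negSucc_zsmul, negSucc_zsmul, neg1Q hM ((m+1) • q) r s, aN]

theorem csmulQ (n : ℤ) (q r : Qd L h2) : Cv h2 (n • q) r = n • Cv h2 q r := by
  have hz : ∀ m : ℕ, Av h2 (m • q) q r = 0 := by
    intro m
    rw [← natCast_zsmul, smul1Q hM, alt1Q hM q r, smul_zero]
  have aN : ∀ m : ℕ, Cv h2 (m • q) r = m • Cv h2 q r := by
    intro m
    induction m with
    | zero => rw [zero_smul, zero_smul, czeroQ]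
    | succ m ih =>
      rw [succ_nsmul, c3Q hM (m • q) q r, ih, hz m]
      rw [succ_nsmul]
      abel
  cases n with
  | ofNat m => rw [Int.ofNat_eq_coe, natCast_zsmul, natCast_zsmul, aN]
  | negSucc m => rw [negSucc_zsmul, negSucc_zsmul, cnegQ hM ((m+1) • q) r, aN]

end Skew

section Pow3

theorem pow3 {a : L} (ha : inCenter a) : a ^ (3:ℕ) = (a * a) * a := by
  have h : a ^ (3:ℕ) = a * (a * (a * 1)) := rfl
  rw [h, IPLoop.mul_one]
  exact (cen_a1 ha a a).symm

end Pow3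

end IPLoopAux

open IPLoop in
/-- Basic identities for commutators and associators in a Moufang loop of
class at most 2. -/
theorem stmt0 {L : Type*} [IPLoop L] (hM : IsMoufang L) (h2 : ClassTwo L) :
    (∀ c d : L, comm c d = (comm d c)⁻¹) ∧
    (∀ (c d : L) (n : ℤ), comm (c ^ n) d = comm c d ^ n) ∧
    (∀ c d e : L, comm (c * d) e = (comm c e * comm d e) * assoc c d e ^ (3 : ℕ)) ∧
    (∀ c d : L, assoc c d d = 1 ∧ assoc d c d = 1 ∧ assoc d d c = 1) ∧
    (∀ c d e : L, assoc c d e = (assoc d c e)⁻¹ ∧ assoc c d e = assoc d e c) ∧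
    (∀ (c d e : L) (n : ℤ), assoc (c ^ n) d e = assoc c d e ^ n) ∧
    (∀ c d e f : L, assoc (c * d) e f = assoc c e f * assoc d e f) := by
  open IPLoopAux in
  refine ⟨fun c d => IPLoopAux.comm_antisym c d, ?_, ?_, ?_, ?_, ?_, ?_⟩
  · intro c d n
    have h1 : comm (c ^ n) d = (Cv h2 (Qd.mk h2 (c ^ n)) (Qd.mk h2 d)).1 :=
      (Cv_mk h2 _ _).symm
    rw [h1, Qd.mk_zpow, csmulQ hM n (Qd.mk h2 c) (Qd.mk h2 d), Zc.val_zsmul, Cv_mk]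
  · intro c d e
    have h := congrArg Subtype.val
      (c3Q hM (q := Qd.mk h2 c) (r := Qd.mk h2 d) (s := Qd.mk h2 e))
    rw [show Qd.mk h2 c + Qd.mk h2 d = Qd.mk h2 (c * d) from rfl] at h
    simp only [Zc.val_add, Cv_mk, Av_mk] at h
    rw [h, pow3 (h2.2 c d e)]
  · exact fun c d => ⟨assoc_ralt hM c d, assoc_flex hM d c, assoc_lalt hM d c⟩
  · intro c d e
    constructor
    · have h := congrArg Subtype.val
        (sk12Q hM (q := Qd.mk h2 c) (r := Qd.mk h2 d) (s := Qd.mk h2 e))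
      rw [Zc.val_neg, Av_mk, Av_mk] at h
      exact h
    · have h := congrArg Subtype.val
        (cyc2Q hM (q := Qd.mk h2 c) (r := Qd.mk h2 d) (s := Qd.mk h2 e))
      rw [Av_mk, Av_mk] at h
      exact h
  · intro c d e n
    have h1 : assoc (c ^ n) d e = (Av h2 (Qd.mk h2 (c ^ n)) (Qd.mk h2 d) (Qd.mk h2 e)).1 :=
      (Av_mk h2 _ _ _).symm
    rw [h1, Qd.mk_zpow, smul1Q hM n (Qd.mk h2 c) (Qd.mk h2 d) (Qd.mk h2 e),
      Zc.val_zsmul, Av_mk]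
  · intro c d e f
    have h := congrArg Subtype.val
      (linQ hM (q := Qd.mk h2 c) (r := Qd.mk h2 d) (s := Qd.mk h2 e) (t := Qd.mk h2 f))
    rw [show Qd.mk h2 c + Qd.mk h2 d = Qd.mk h2 (c * d) from rfl] at h
    rw [Zc.val_add, Av_mk, Av_mk, Av_mk] at h
    exact h
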